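/- arXiv:2510.10277 — 4 statements merged into one kernel-verified Lean document; each statement's English description precedes it below -/
import Mathlib

section
/- Let K = ℚ(√d) be a real quadratic field (d > 1 squarefree), 𝔞 a nonzero ideal of O_K with absolute norm N𝔞, and q_A the quadratic form on V_A = ℚ × ℚ × K given by q_A(x, y, λ) = N(λ)/N𝔞 − x·y. Then for every ℚ-basis (e₁, e₂, e₃, e₄) of V_A, the determinant of the Gram matrix ((eᵢ, eⱼ))ᵢⱼ of q_A equals d·r² for some nonzero rational number r; that is, the discriminant d(V_A) of (V_A, q_A) equals d in ℚ×/(ℚ×)². -/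
/-- The discriminant of `(V_A, q_A)` with `q_A(x,y,λ) = N(λ)/N𝔞 - x·y`
equals `d` in `ℚ×/(ℚ×)²`: for every ℚ-basis of `V_A = ℚ × ℚ × K`, the determinant
of the Gram matrix of `q_A` equals `d·r²` for some nonzero rational `r`. -/
theorem statement2 (K : Type) [Field K] [NumberField K]
    (hdeg : Module.finrank ℚ K = 2)
    (d : ℤ) (hd : 1 < d) (hsf : Squarefree d)
    (α : K) (hα : α ^ 2 = (d : K))
    (𝔞 : Ideal (NumberField.RingOfIntegers K)) (h𝔞 : 𝔞 ≠ ⊥)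
    (q : QuadraticForm ℚ (ℚ × ℚ × K))
    (hq : ∀ z : ℚ × ℚ × K,
      q z = Algebra.norm ℚ z.2.2 / (Ideal.absNorm 𝔞 : ℚ) - z.1 * z.2.1) :
    ∀ b : Module.Basis (Fin 4) ℚ (ℚ × ℚ × K),
      ∃ r : ℚ, r ≠ 0 ∧
        Matrix.det (Matrix.of fun i j : Fin 4 => QuadraticMap.polar (⇑q) (b i) (b j))
          = (d : ℚ) * r ^ 2 := by
  -- no rational square root of d
  have hnr : ∀ c : ℚ, c ^ 2 ≠ (d : ℚ) := by
    intro c hc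
    have : IsSquare ((d : ℤ) : ℚ) := ⟨c, by rw [← hc]; ring⟩
    rw [Rat.isSquare_intCast_iff] at this
    obtain ⟨m, hm⟩ := this
    have hu : IsUnit m := hsf m (by rw [hm])
    rcases Int.isUnit_iff.mp hu with h | h <;> subst h <;> simp at hm <;> omega
  -- {1, α} is linearly independent
  have hli : LinearIndependent ℚ ![(1 : K), α] := by
    rw [LinearIndependent.pair_iff]
    intro s t hst
    simp only [smul_eq_mul, mul_one, Rat.smul_one_eq_cast, Algebra.smul_def,
      eq_ratCast] at hst
    by_cases ht : t = 0
    · subst ht; simp at hst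
      exact ⟨by exact_mod_cast hst, rfl⟩
    · exfalso
      have htK : ((t : K)) ≠ 0 := by exact_mod_cast ht
      have hαeq : (((-s / t : ℚ)) : K) = α := by
        push_cast
        field_simp
        linear_combination -hst
      apply hnr (-s / t)
      apply Rat.cast_injective (α := K)
      rw [show (((-s / t) ^ 2 : ℚ) : K) = (((-s / t : ℚ) : K)) ^ 2 by push_cast; ring,
        hαeq, hα]
      push_cast; ring
  let bK : Module.Basis (Fin 2) ℚ K := basisOfLinearIndependentOfCardEqFinrank hli (by simp [hdeg])
  have hb0 : bK 0 = 1 := by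
    simp [bK, coe_basisOfLinearIndependentOfCardEqFinrank]
  have hb1 : bK 1 = α := by
    simp [bK, coe_basisOfLinearIndependentOfCardEqFinrank]
  -- norm formula
  have hN : ∀ a b : ℚ, Algebra.norm ℚ ((a : K) + b • α) = a ^ 2 - d * b ^ 2 := by
    intro a b
    have hx0 : ((a : K) + b • α) * bK 0 = a • bK 0 + b • bK 1 := by
      rw [hb0, hb1]
      simp [Algebra.smul_def, eq_ratCast]
    have hx1 : ((a : K) + b • α) * bK 1 = ((d : ℚ) * b) • bK 0 + a • bK 1 := by
      rw [hb0, hb1]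
      simp only [Algebra.smul_def, eq_ratCast, mul_one]
      push_cast
      linear_combination (b : K) * hα
    rw [Algebra.norm_eq_matrix_det bK]
    have hM : Algebra.leftMulMatrix bK ((a : K) + b • α) = !![a, (d : ℚ) * b; b, a] := by
      ext i j
      rw [Algebra.leftMulMatrix_eq_repr_mul]
      fin_cases i <;> fin_cases j <;>
        simp [hx0, hx1, Finsupp.single_apply]
    rw [hM, Matrix.det_fin_two_of]
    ring
  have hN0 : Algebra.norm ℚ (0 : K) = 0 := by simpa using hN 0 0
  have hN1 : Algebra.norm ℚ (1 : K) = 1 := by simpa using hN 1 0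
  have hN2 : Algebra.norm ℚ ((1 : K) + 1) = 4 := by
    have := hN 2 0
    norm_num at this
    simpa [one_add_one_eq_two] using this
  have hNa : Algebra.norm ℚ α = -d := by simpa using hN 0 1
  have hN1a : Algebra.norm ℚ ((1 : K) + α) = 1 - d := by simpa using hN 1 1
  have hN1a' : Algebra.norm ℚ (α + (1 : K)) = 1 - d := by rw [add_comm]; exact hN1a
  have hN2a : Algebra.norm ℚ (α + α) = -4 * d := by
    have := hN 0 2
    rw [two_smul] at this
    norm_num at this
    linarith
  -- the norm of the ideal
  set n : ℚ := (Ideal.absNorm 𝔞 : ℚ) with hn_def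
  have hn : n ≠ 0 := by
    simp only [hn_def, ne_eq, Nat.cast_eq_zero, Ideal.absNorm_eq_zero_iff]
    exact h𝔞
  -- the reference basis
  let eqv : (Fin 1 ⊕ (Fin 1 ⊕ Fin 2)) ≃ Fin 4 :=
    (Equiv.sumCongr (Equiv.refl (Fin 1)) finSumFinEquiv).trans finSumFinEquiv
  let e : Module.Basis (Fin 4) ℚ (ℚ × ℚ × K) :=
    (((Module.Basis.singleton (Fin 1) ℚ).prod ((Module.Basis.singleton (Fin 1) ℚ).prod bK)).reindex eqv)
  have he0 : e 0 = ((1 : ℚ), (0 : ℚ), (0 : K)) := by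
    rw [show (0 : Fin 4) = eqv (Sum.inl 0) from rfl]
    simp [e, Module.Basis.reindex_apply, Module.Basis.prod_apply]
    rfl
  have he1 : e 1 = ((0 : ℚ), (1 : ℚ), (0 : K)) := by
    rw [show (1 : Fin 4) = eqv (Sum.inr (Sum.inl 0)) from rfl]
    simp [e, Module.Basis.reindex_apply, Module.Basis.prod_apply]
  have he2 : e 2 = ((0 : ℚ), (0 : ℚ), (1 : K)) := by
    rw [show (2 : Fin 4) = eqv (Sum.inr (Sum.inr 0)) from rfl]
    simp [e, Module.Basis.reindex_apply, Module.Basis.prod_apply, hb0]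
  have he3 : e 3 = ((0 : ℚ), (0 : ℚ), α) := by
    rw [show (3 : Fin 4) = eqv (Sum.inr (Sum.inr 1)) from rfl]
    simp [e, Module.Basis.reindex_apply, Module.Basis.prod_apply, hb1]
  -- Gram matrix in the reference basis
  have hGe : LinearMap.BilinForm.toMatrix e q.polarBilin =
      !![0, -1, 0, 0; -1, 0, 0, 0; 0, 0, 2 / n, 0; 0, 0, 0, -2 * d / n] := by
    ext i j
    rw [LinearMap.BilinForm.toMatrix_apply]
    fin_cases i <;> fin_cases j <;>
      simp [QuadraticMap.polarBilin, QuadraticMap.polar, he0, he1, he2, he3, hq,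
        Prod.mk_add_mk, hN0, hN1, hN2, hNa, hN1a, hN1a', hN2a, Matrix.vecHead, Matrix.vecTail] <;>
      field_simp <;> ring
  intro b
  have hM : (Matrix.of fun i j : Fin 4 => QuadraticMap.polar (⇑q) (b i) (b j)) =
      LinearMap.BilinForm.toMatrix b q.polarBilin := by
    ext i j
    rw [LinearMap.BilinForm.toMatrix_apply]
    simp [QuadraticMap.polarBilin]
  set c : ℚ := (e.toMatrix b).det with hc_def
  have hc : c ≠ 0 := by
    have := e.isUnit_det b
    rw [Module.Basis.det_apply] at this
    exact this.ne_zero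
  refine ⟨2 * c / n, by positivity, ?_⟩
  rw [hM, ← LinearMap.BilinForm.toMatrix_mul_basis_toMatrix e b, Matrix.det_mul,
    Matrix.det_mul, Matrix.det_transpose, hGe, ← hc_def]
  have hdet : Matrix.det
      !![(0:ℚ), -1, 0, 0; -1, 0, 0, 0; 0, 0, 2 / n, 0; 0, 0, 0, -2 * d / n] =
      4 * d / n ^ 2 := by
    rw [Matrix.det_succ_row_zero]
    simp [Fin.sum_univ_succ, Matrix.det_fin_three,
      show (Fin.succAbove 1 2 : Fin 4) = 3 by decide]
    field_simp
    ring
  rw [hdet]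
  field_simp
  ring
end

section
/- Let K be a real quadratic field, 𝔞 a nonzero ideal of O_K with absolute norm N𝔞, and Q_A the quadratic form on V_A = K × K given by Q_A(z₁, z₂) = N(z₁)/N𝔞 − N(z₂)/N𝔞. Then the center of the even subalgebra C⁰ of the Clifford algebra of Q_A is isomorphic as a ℚ-algebra to ℚ × ℚ (the split two-dimensional étale ℚ-algebra); equivalently, the center is two-dimensional over ℚ and contains a nontrivial idempotent. -/
open CliffordAlgebra

noncomputable section Aux8

/-- Transport the center along an algebra equivalence. -/
def myCenterCongr {R A B : Type*} [CommSemiring R] [Semiring A] [Semiring B]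
    [Algebra R A] [Algebra R B] (e : A ≃ₐ[R] B) :
    Subalgebra.center R A ≃ₐ[R] Subalgebra.center R B where
  toFun x := ⟨e x, by
    rw [Subalgebra.mem_center_iff]
    intro b
    have hx := Subalgebra.mem_center_iff.mp x.2 (e.symm b)
    calc b * e x = e (e.symm b * x) := by simp
    _ = e (x * e.symm b) := by rw [hx]
    _ = e x * b := by simp⟩
  invFun y := ⟨e.symm y, by
    rw [Subalgebra.mem_center_iff]
    intro a
    have hy := Subalgebra.mem_center_iff.mp y.2 (e a)
    calc a * e.symm y = e.symm (e a * y) := by simp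
    _ = e.symm (y * e a) := by rw [hy]
    _ = e.symm y * a := by simp⟩
  left_inv x := by ext; simp
  right_inv y := by ext; simp
  map_mul' x y := by ext; simp
  map_add' x y := by ext; simp
  commutes' r := by ext; simp

lemma myEvenMap {R N₁ N₂ : Type*} [CommRing R] [AddCommGroup N₁] [AddCommGroup N₂]
    [Module R N₁] [Module R N₂] {P₁ : QuadraticForm R N₁} {P₂ : QuadraticForm R N₂}
    (f : P₁.IsometryEquiv P₂) (x : CliffordAlgebra P₁) (hx : x ∈ even P₁) :
    equivOfIsometry f x ∈ even P₂ := by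
  replace hx : x ∈ evenOdd P₁ 0 := hx
  induction x, hx using even_induction with
  | algebraMap r =>
      simp only [AlgEquiv.commutes]
      exact (even P₂).algebraMap_mem r
  | add x y hx hy ihx ihy => rw [map_add]; exact add_mem ihx ihy
  | ι_mul_ι_mul m₁ m₂ x hx ih =>
      rw [map_mul, map_mul, equivOfIsometry_apply, equivOfIsometry_apply, map_apply_ι,
        map_apply_ι]
      have h1 : (ι P₂) (f.toIsometry m₁) * (ι P₂) (f.toIsometry m₂) ∈ even P₂ :=
        ι_mul_ι_mem_evenOdd_zero P₂ _ _
      exact mul_mem h1 ih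

/-- The even subalgebras of Clifford algebras of isometric forms are isomorphic. -/
def myEvenCongr {R M₁ M₂ : Type*} [CommRing R] [AddCommGroup M₁] [AddCommGroup M₂]
    [Module R M₁] [Module R M₂] {Q₁ : QuadraticForm R M₁} {Q₂ : QuadraticForm R M₂}
    (e : Q₁.IsometryEquiv Q₂) :
    (CliffordAlgebra.even Q₁) ≃ₐ[R] (CliffordAlgebra.even Q₂) where
  toFun x := ⟨equivOfIsometry e x, myEvenMap e x x.2⟩
  invFun y := ⟨(equivOfIsometry e).symm y, by
    rw [equivOfIsometry_symm]; exact myEvenMap e.symm y y.2⟩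
  left_inv x := Subtype.ext ((equivOfIsometry e).symm_apply_apply x)
  right_inv y := Subtype.ext ((equivOfIsometry e).apply_symm_apply y)
  map_mul' x y := by ext; simp
  map_add' x y := by ext; simp
  commutes' r := by
    ext
    simp only [Subalgebra.coe_algebraMap]
    exact (equivOfIsometry e).commutes r



noncomputable section Aux8B

abbrev M2Q := Matrix (Fin 2) (Fin 2) ℚ
abbrev AA := M2Q × M2Q

/-- The quadratic form `x² - y² + z²` on `(ℚ × ℚ) × ℚ`. -/
def Q3 : QuadraticForm ℚ ((ℚ × ℚ) × ℚ) :=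
  (CliffordAlgebraQuaternion.Q (1 : ℚ) (-1)).prod (QuadraticMap.sq (R := ℚ))

lemma Q3_apply (v : (ℚ × ℚ) × ℚ) : Q3 v = v.1.1 * v.1.1 - v.1.2 * v.1.2 + v.2 * v.2 := by
  simp [Q3, QuadraticMap.prod_apply, CliffordAlgebraQuaternion.Q_apply, QuadraticMap.sq_apply]
  ring

def σ1 : M2Q := !![0,1;1,0]
def εm : M2Q := !![0,-1;1,0]
def σ3 : M2Q := !![1,0;0,-1]

def γ1 : AA := (σ1, σ1)
def γ2 : AA := (εm, εm)
def γ3 : AA := (σ3, -σ3)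

def fγ : ((ℚ × ℚ) × ℚ) →ₗ[ℚ] AA where
  toFun v := v.1.1 • γ1 + v.1.2 • γ2 + v.2 • γ3
  map_add' v w := by
    simp only [Prod.fst_add, Prod.snd_add, add_smul]
    abel
  map_smul' c v := by
    simp only [Prod.smul_fst, Prod.smul_snd, smul_eq_mul, RingHom.id_apply, smul_smul, smul_add]

lemma matrix_sq (a b c : ℚ) :
    (a • σ1 + b • εm + c • σ3) * (a • σ1 + b • εm + c • σ3)
      = (a*a - b*b + c*c) • (1 : M2Q) := by
  show _ = (a*a - b*b + c*c) • (1 : Matrix (Fin 2) (Fin 2) ℚ)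
  rw [Matrix.smul_one_eq_diagonal]
  ext i j
  fin_cases i <;> fin_cases j <;>
    simp [σ1, εm, σ3, Matrix.mul_apply, Fin.sum_univ_succ, Matrix.diagonal] <;> ring

lemma matrix_sq' (a b c : ℚ) :
    (a • σ1 + b • εm + (-c) • σ3) * (a • σ1 + b • εm + (-c) • σ3)
      = (a*a - b*b + c*c) • (1 : M2Q) := by
  have := matrix_sq a b (-c)
  simpa using this

lemma hfγ : ∀ v, fγ v * fγ v = algebraMap ℚ AA (Q3 v) := by
  intro v
  have h1 : fγ v = (v.1.1 • σ1 + v.1.2 • εm + v.2 • σ3,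
      v.1.1 • σ1 + v.1.2 • εm + (-v.2) • σ3) := by
    simp [fγ, γ1, γ2, γ3, Prod.ext_iff, neg_smul]
  rw [h1, Q3_apply, Prod.mk_mul_mk, matrix_sq, matrix_sq', Algebra.algebraMap_eq_smul_one]
  rfl

def Fc : CliffordAlgebra Q3 →ₐ[ℚ] AA := CliffordAlgebra.lift Q3 ⟨fγ, hfγ⟩

def u1 : CliffordAlgebra Q3 := ι Q3 ((1,0),0)
def u2 : CliffordAlgebra Q3 := ι Q3 ((0,1),0)
def u3 : CliffordAlgebra Q3 := ι Q3 ((0,0),1)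

lemma Fc_u1 : Fc u1 = γ1 := by
  rw [Fc, u1, CliffordAlgebra.lift_ι_apply]; show (1:ℚ) • γ1 + (0:ℚ) • γ2 + (0:ℚ) • γ3 = γ1; simp
lemma Fc_u2 : Fc u2 = γ2 := by
  rw [Fc, u2, CliffordAlgebra.lift_ι_apply]; show (0:ℚ) • γ1 + (1:ℚ) • γ2 + (0:ℚ) • γ3 = γ2; simp
lemma Fc_u3 : Fc u3 = γ3 := by
  rw [Fc, u3, CliffordAlgebra.lift_ι_apply]; show (0:ℚ) • γ1 + (0:ℚ) • γ2 + (1:ℚ) • γ3 = γ3; simp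

-- relations
lemma u1_sq : u1 * u1 = 1 := by
  rw [u1, ι_sq_scalar]
  simp [Q3_apply]
lemma u2_sq : u2 * u2 = -1 := by
  rw [u2, ι_sq_scalar]
  simp [Q3_apply]
lemma u3_sq : u3 * u3 = 1 := by
  rw [u3, ι_sq_scalar]
  simp [Q3_apply]

lemma polar_eq (v w : (ℚ × ℚ) × ℚ) :
    QuadraticMap.polar Q3 v w
      = v.1.1*w.1.1 + w.1.1*v.1.1 - v.1.2*w.1.2 - w.1.2*v.1.2 + v.2*w.2 + w.2*v.2 := by
  simp [QuadraticMap.polar, Q3_apply]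
  ring

lemma u2_mul_u1 : u2 * u1 = -(u1 * u2) := by
  have h := ι_mul_ι_add_swap (Q := Q3) ((1,0),0) ((0,1),0)
  rw [polar_eq] at h
  simp only at h
  rw [u1, u2]
  linear_combination (norm := (push_cast; noncomm_ring)) h
lemma u3_mul_u1 : u3 * u1 = -(u1 * u3) := by
  have h := ι_mul_ι_add_swap (Q := Q3) ((1,0),0) ((0,0),1)
  rw [polar_eq] at h
  simp only at h
  rw [u1, u3]
  linear_combination (norm := (push_cast; noncomm_ring)) h
lemma u3_mul_u2 : u3 * u2 = -(u2 * u3) := by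
  have h := ι_mul_ι_add_swap (Q := Q3) ((0,1),0) ((0,0),1)
  rw [polar_eq] at h
  simp only at h
  rw [u2, u3]
  linear_combination (norm := (push_cast; noncomm_ring)) h



section Span
open Submodule

def gmon : Fin 8 → CliffordAlgebra Q3 :=
  ![1, u1, u2, u3, u1*u2, u1*u3, u2*u3, u1*(u2*u3)]

abbrev SS : Submodule ℚ (CliffordAlgebra Q3) := Submodule.span ℚ (Set.range gmon)

lemma range_gmon : Set.range gmon
    = {1, u1, u2, u3, u1*u2, u1*u3, u2*u3, u1*(u2*u3)} := by
  simp only [gmon, Matrix.range_cons, Matrix.range_empty, Set.union_empty]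
  ext x
  simp only [Set.mem_union, Set.mem_singleton_iff, Set.mem_insert_iff]

lemma hs0 : (1 : CliffordAlgebra Q3) ∈ SS := subset_span (by rw [range_gmon]; tauto)
lemma hs1 : u1 ∈ SS := subset_span (by rw [range_gmon]; tauto)
lemma hs2 : u2 ∈ SS := subset_span (by rw [range_gmon]; tauto)
lemma hs3 : u3 ∈ SS := subset_span (by rw [range_gmon]; tauto)
lemma hs4 : u1*u2 ∈ SS := subset_span (by rw [range_gmon]; tauto)
lemma hs5 : u1*u3 ∈ SS := subset_span (by rw [range_gmon]; tauto)
lemma hs6 : u2*u3 ∈ SS := subset_span (by rw [range_gmon]; tauto)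
lemma hs7 : u1*(u2*u3) ∈ SS := subset_span (by rw [range_gmon]; tauto)

-- rewriting helpers
lemma u1_mul_u1' (x : CliffordAlgebra Q3) : u1 * (u1 * x) = x := by
  rw [← mul_assoc, u1_sq, one_mul]
lemma u2_mul_u2' (x : CliffordAlgebra Q3) : u2 * (u2 * x) = -x := by
  rw [← mul_assoc, u2_sq, neg_one_mul]
lemma u3_mul_u3' (x : CliffordAlgebra Q3) : u3 * (u3 * x) = x := by
  rw [← mul_assoc, u3_sq, one_mul]
lemma u2_mul_u1' (x : CliffordAlgebra Q3) : u2 * (u1 * x) = -(u1 * (u2 * x)) := by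
  rw [← mul_assoc, u2_mul_u1, ← mul_assoc, neg_mul]
lemma u3_mul_u1' (x : CliffordAlgebra Q3) : u3 * (u1 * x) = -(u1 * (u3 * x)) := by
  rw [← mul_assoc, u3_mul_u1, ← mul_assoc, neg_mul]
lemma u3_mul_u2' (x : CliffordAlgebra Q3) : u3 * (u2 * x) = -(u2 * (u3 * x)) := by
  rw [← mul_assoc, u3_mul_u2, ← mul_assoc, neg_mul]

lemma mulL1 : ∀ x ∈ SS, u1 * x ∈ SS := by
  intro x hx
  induction hx using Submodule.span_induction with
  | mem x hx =>
      rw [range_gmon] at hx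
      simp only [Set.mem_insert_iff, Set.mem_singleton_iff] at hx
      rcases hx with rfl|rfl|rfl|rfl|rfl|rfl|rfl|rfl
      · rw [mul_one]; exact hs1
      · rw [u1_sq]; exact hs0
      · exact hs4
      · exact hs5
      · rw [u1_mul_u1']; exact hs2
      · rw [u1_mul_u1']; exact hs3
      · exact hs7
      · rw [u1_mul_u1']; exact hs6
  | zero => rw [mul_zero]; exact zero_mem SS
  | add x y _ _ ihx ihy => rw [mul_add]; exact add_mem ihx ihy
  | smul c x _ ih => rw [mul_smul_comm]; exact smul_mem _ _ ih

lemma mulL2 : ∀ x ∈ SS, u2 * x ∈ SS := by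
  intro x hx
  induction hx using Submodule.span_induction with
  | mem x hx =>
      rw [range_gmon] at hx
      simp only [Set.mem_insert_iff, Set.mem_singleton_iff] at hx
      rcases hx with rfl|rfl|rfl|rfl|rfl|rfl|rfl|rfl
      · rw [mul_one]; exact hs2
      · rw [u2_mul_u1]; exact neg_mem hs4
      · rw [u2_sq]; exact neg_mem hs0
      · exact hs6
      · rw [u2_mul_u1', u2_sq, mul_neg_one, neg_neg]; exact hs1
      · rw [u2_mul_u1']; exact neg_mem hs7
      · rw [u2_mul_u2']; exact neg_mem hs3
      · rw [u2_mul_u1', u2_mul_u2', mul_neg, neg_neg]; exact hs5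
  | zero => rw [mul_zero]; exact zero_mem SS
  | add x y _ _ ihx ihy => rw [mul_add]; exact add_mem ihx ihy
  | smul c x _ ih => rw [mul_smul_comm]; exact smul_mem _ _ ih

lemma mulL3 : ∀ x ∈ SS, u3 * x ∈ SS := by
  intro x hx
  induction hx using Submodule.span_induction with
  | mem x hx =>
      rw [range_gmon] at hx
      simp only [Set.mem_insert_iff, Set.mem_singleton_iff] at hx
      rcases hx with rfl|rfl|rfl|rfl|rfl|rfl|rfl|rfl
      · rw [mul_one]; exact hs3
      · rw [u3_mul_u1]; exact neg_mem hs5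
      · rw [u3_mul_u2]; exact neg_mem hs6
      · rw [u3_sq]; exact hs0
      · rw [u3_mul_u1', u3_mul_u2, mul_neg, neg_neg]; exact hs7
      · rw [u3_mul_u1', u3_sq, mul_one]; exact neg_mem hs1
      · rw [u3_mul_u2', u3_sq, mul_one]; exact neg_mem hs2
      · rw [u3_mul_u1', u3_mul_u2', u3_sq, mul_one, mul_neg, neg_neg]; exact hs4
  | zero => rw [mul_zero]; exact zero_mem SS
  | add x y _ _ ihx ihy => rw [mul_add]; exact add_mem ihx ihy
  | smul c x _ ih => rw [mul_smul_comm]; exact smul_mem _ _ ih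

lemma mulSS : ∀ x ∈ SS, ∀ y ∈ SS, x * y ∈ SS := by
  intro x hx
  induction hx using Submodule.span_induction with
  | mem x hx =>
      rw [range_gmon] at hx
      simp only [Set.mem_insert_iff, Set.mem_singleton_iff] at hx
      intro y hy
      rcases hx with rfl|rfl|rfl|rfl|rfl|rfl|rfl|rfl
      · rw [one_mul]; exact hy
      · exact mulL1 y hy
      · exact mulL2 y hy
      · exact mulL3 y hy
      · rw [mul_assoc]; exact mulL1 _ (mulL2 y hy)
      · rw [mul_assoc]; exact mulL1 _ (mulL3 y hy)
      · rw [mul_assoc]; exact mulL2 _ (mulL3 y hy)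
      · rw [mul_assoc, mul_assoc]; exact mulL1 _ (mulL2 _ (mulL3 y hy))
  | zero => intro y hy; rw [zero_mul]; exact zero_mem SS
  | add x x' _ _ ihx ihx' =>
      intro y hy
      rw [add_mul]; exact add_mem (ihx y hy) (ihx' y hy)
  | smul c x _ ih =>
      intro y hy
      rw [smul_mul_assoc]; exact smul_mem _ _ (ih y hy)

lemma mem_all (x : CliffordAlgebra Q3) : x ∈ SS := by
  induction x using CliffordAlgebra.induction with
  | algebraMap r =>
      rw [Algebra.algebraMap_eq_smul_one]
      exact smul_mem _ _ hs0
  | ι v =>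
      have hv : v = v.1.1 • (((1:ℚ),(0:ℚ)),(0:ℚ)) + v.1.2 • (((0:ℚ),(1:ℚ)),(0:ℚ))
          + v.2 • (((0:ℚ),(0:ℚ)),(1:ℚ)) := by
        refine Prod.ext (Prod.ext ?_ ?_) ?_ <;> simp
      rw [hv, map_add, map_add, map_smul, map_smul, map_smul]
      exact add_mem (add_mem (smul_mem _ _ hs1) (smul_mem _ _ hs2)) (smul_mem _ _ hs3)
  | mul x y ihx ihy => exact mulSS x ihx y ihy
  | add x y ihx ihy => exact add_mem ihx ihy

lemma span_top : SS = ⊤ := eq_top_iff.mpr fun x _ => mem_all x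

end Span


section Surj

lemma mem_γ1 : γ1 ∈ Fc.range := Fc.mem_range.mpr ⟨u1, Fc_u1⟩
lemma mem_γ2 : γ2 ∈ Fc.range := Fc.mem_range.mpr ⟨u2, Fc_u2⟩
lemma mem_γ3 : γ3 ∈ Fc.range := Fc.mem_range.mpr ⟨u3, Fc_u3⟩

lemma hγ13 : γ1 * γ3 = ((εm, -εm) : AA) := by
  refine Prod.ext ?_ ?_ <;>
  · show _ = _
    ext i j
    fin_cases i <;> fin_cases j <;>
      simp [σ1, σ3, εm, γ1, γ3, Matrix.mul_apply, Fin.sum_univ_succ]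

lemma mem_e1 : ((εm, 0) : AA) ∈ Fc.range := by
  have h : ((εm, 0) : AA) = (2⁻¹ : ℚ) • (γ2 + γ1 * γ3) := by
    rw [hγ13]
    refine Prod.ext ?_ ?_ <;>
    · show _ = _
      ext i j
      fin_cases i <;> fin_cases j <;> simp [εm, γ2] <;> norm_num
  rw [h]
  exact Subalgebra.smul_mem _ (add_mem mem_γ2 (mul_mem mem_γ1 mem_γ3)) _

lemma mem_e2 : ((0, εm) : AA) ∈ Fc.range := by
  have h : ((0, εm) : AA) = (2⁻¹ : ℚ) • (γ2 - γ1 * γ3) := by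
    rw [hγ13]
    refine Prod.ext ?_ ?_ <;>
    · show _ = _
      ext i j
      fin_cases i <;> fin_cases j <;> simp [εm, γ2] <;> norm_num
  rw [h]
  exact Subalgebra.smul_mem _ (sub_mem mem_γ2 (mul_mem mem_γ1 mem_γ3)) _

lemma mem_one1 : ((1, 0) : AA) ∈ Fc.range := by
  have h : ((1, 0) : AA) = -(((εm, 0) : AA) * (εm, 0)) := by
    refine Prod.ext ?_ ?_ <;>
    · show _ = _
      ext i j
      fin_cases i <;> fin_cases j <;>
        simp [εm, Matrix.mul_apply, Fin.sum_univ_succ, Matrix.one_apply]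
  rw [h]
  exact neg_mem (mul_mem mem_e1 mem_e1)

lemma mem_one2 : ((0, 1) : AA) ∈ Fc.range := by
  have h : ((0, 1) : AA) = 1 - ((1, 0) : AA) := by
    refine Prod.ext ?_ ?_ <;> simp
  rw [h]
  exact sub_mem (one_mem _) mem_one1

lemma mem_s11 : ((σ1, 0) : AA) ∈ Fc.range := by
  have h : ((σ1, 0) : AA) = ((1, 0) : AA) * γ1 := by
    refine Prod.ext ?_ ?_ <;> simp [γ1]
  rw [h]; exact mul_mem mem_one1 mem_γ1

lemma mem_s31 : ((σ3, 0) : AA) ∈ Fc.range := by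
  have h : ((σ3, 0) : AA) = ((1, 0) : AA) * γ3 := by
    refine Prod.ext ?_ ?_ <;> simp [γ3]
  rw [h]; exact mul_mem mem_one1 mem_γ3

lemma mem_s12 : ((0, σ1) : AA) ∈ Fc.range := by
  have h : ((0, σ1) : AA) = ((0, 1) : AA) * γ1 := by
    refine Prod.ext ?_ ?_ <;> simp [γ1]
  rw [h]; exact mul_mem mem_one2 mem_γ1

lemma mem_s32 : ((0, σ3) : AA) ∈ Fc.range := by
  have h : ((0, σ3) : AA) = -(((0, 1) : AA) * γ3) := by
    refine Prod.ext ?_ ?_ <;> simp [γ3]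
  rw [h]; exact neg_mem (mul_mem mem_one2 mem_γ3)

lemma matrix_decomp (m : M2Q) :
    m = ((m 0 0 + m 1 1)/2) • 1 + ((m 0 1 + m 1 0)/2) • σ1
      + ((m 1 0 - m 0 1)/2) • εm + ((m 0 0 - m 1 1)/2) • σ3 := by
  ext i j
  fin_cases i <;> fin_cases j <;>
    simp [σ1, εm, σ3, Matrix.one_apply] <;> ring

lemma mem_pair1 (m : M2Q) : ((m, 0) : AA) ∈ Fc.range := by
  have h : ((m, 0) : AA) = ((m 0 0 + m 1 1)/2) • ((1,0) : AA) + ((m 0 1 + m 1 0)/2) • (σ1, 0)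
      + ((m 1 0 - m 0 1)/2) • (εm, 0) + ((m 0 0 - m 1 1)/2) • (σ3, 0) := by
    refine Prod.ext ?_ ?_
    · exact matrix_decomp m
    · show (0 : M2Q) = _; simp
  rw [h]
  exact add_mem (add_mem (add_mem (Subalgebra.smul_mem _ mem_one1 _)
    (Subalgebra.smul_mem _ mem_s11 _)) (Subalgebra.smul_mem _ mem_e1 _))
    (Subalgebra.smul_mem _ mem_s31 _)

lemma mem_pair2 (m : M2Q) : ((0, m) : AA) ∈ Fc.range := by
  have h : ((0, m) : AA) = ((m 0 0 + m 1 1)/2) • ((0,1) : AA) + ((m 0 1 + m 1 0)/2) • (0, σ1)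
      + ((m 1 0 - m 0 1)/2) • (0, εm) + ((m 0 0 - m 1 1)/2) • (0, σ3) := by
    refine Prod.ext ?_ ?_
    · show (0 : M2Q) = _; simp
    · exact matrix_decomp m
  rw [h]
  exact add_mem (add_mem (add_mem (Subalgebra.smul_mem _ mem_one2 _)
    (Subalgebra.smul_mem _ mem_s12 _)) (Subalgebra.smul_mem _ mem_e2 _))
    (Subalgebra.smul_mem _ mem_s32 _)

lemma Fc_surj : Function.Surjective Fc := by
  intro x
  have : x ∈ Fc.range := by
    have h : x = ((x.1, 0) : AA) + (0, x.2) := by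
      refine Prod.ext ?_ ?_ <;> simp
    rw [h]
    exact add_mem (mem_pair1 x.1) (mem_pair2 x.2)
  exact this

instance : Module.Finite ℚ (CliffordAlgebra Q3) :=
  ⟨span_top ▸ Submodule.fg_span (Set.finite_range gmon)⟩

lemma finrank_AA : Module.finrank ℚ AA = 8 := by
  have h2 : Module.finrank ℚ M2Q = 4 := by
    rw [Module.finrank_matrix]
    simp
  rw [Module.finrank_prod, h2]

lemma finrank_C3 : Module.finrank ℚ (CliffordAlgebra Q3) = 8 := by
  refine le_antisymm ?_ ?_
  · have h := finrank_range_le_card (R := ℚ) gmon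
    rw [Set.finrank] at h
    rw [← finrank_top ℚ (CliffordAlgebra Q3), ← span_top]
    simpa using h
  · have h := LinearMap.finrank_range_le Fc.toLinearMap
    have hr : LinearMap.range Fc.toLinearMap = ⊤ := LinearMap.range_eq_top.mpr Fc_surj
    rw [hr, finrank_top, finrank_AA] at h
    exact h

lemma Fc_inj : Function.Injective Fc := by
  have heq : Module.finrank ℚ (CliffordAlgebra Q3) = Module.finrank ℚ AA := by
    rw [finrank_C3, finrank_AA]
  exact (LinearMap.injective_iff_surjective_of_finrank_eq_finrank
    (f := Fc.toLinearMap) heq).mpr Fc_surj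

def Φc : CliffordAlgebra Q3 ≃ₐ[ℚ] AA := AlgEquiv.ofBijective Fc ⟨Fc_inj, Fc_surj⟩

end Surj

section CenterAA

def ψAA : (ℚ × ℚ) →ₐ[ℚ] Subalgebra.center ℚ AA where
  toFun p := ⟨(algebraMap ℚ M2Q p.1, algebraMap ℚ M2Q p.2), by
    rw [Subalgebra.mem_center_iff]
    intro b
    refine Prod.ext ?_ ?_
    · exact (Algebra.commutes p.1 b.1).symm
    · exact (Algebra.commutes p.2 b.2).symm⟩
  map_one' := by ext : 2 <;> simp
  map_mul' x y := by ext : 2 <;> simp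
  map_zero' := by ext : 2 <;> simp
  map_add' x y := by ext : 2 <;> simp
  commutes' r := by ext : 2 <;> simp

lemma ψAA_bij : Function.Bijective ψAA := by
  constructor
  · intro x y hxy
    have hxy' : ((algebraMap ℚ M2Q x.1, algebraMap ℚ M2Q x.2) : AA)
        = (algebraMap ℚ M2Q y.1, algebraMap ℚ M2Q y.2) := congrArg Subtype.val hxy
    rw [Prod.mk.injEq] at hxy'
    have i1 : Function.Injective (algebraMap ℚ M2Q) := RingHom.injective _
    exact Prod.ext (i1 hxy'.1) (i1 hxy'.2)
  · rintro ⟨⟨x1, x2⟩, hx⟩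
    have inst1 : Algebra.IsCentral ℚ ℚ := Algebra.IsCentral.self ℚ
    have hx1 : x1 ∈ Subalgebra.center ℚ M2Q := by
      rw [Subalgebra.mem_center_iff]
      intro b
      have := Subalgebra.mem_center_iff.mp hx (b, 0)
      exact congrArg Prod.fst this
    have hx2 : x2 ∈ Subalgebra.center ℚ M2Q := by
      rw [Subalgebra.mem_center_iff]
      intro b
      have := Subalgebra.mem_center_iff.mp hx (0, b)
      exact congrArg Prod.snd this
    rw [Algebra.IsCentral.center_eq_bot, Algebra.mem_bot] at hx1 hx2
    obtain ⟨r, hr⟩ := hx1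
    obtain ⟨s, hs⟩ := hx2
    exact ⟨(r, s), by ext : 2 <;> simp [ψAA, hr, hs]⟩

def centerAAEquiv : Subalgebra.center ℚ AA ≃ₐ[ℚ] (ℚ × ℚ) :=
  (AlgEquiv.ofBijective ψAA ψAA_bij).symm

end CenterAA
end Aux8B

noncomputable section Aux8C

/-- norm formula for a quadratic field -/
lemma norm_formula {K : Type} [Field K] [NumberField K] (hdeg : Module.finrank ℚ K = 2)
    (δ : ℚ) (α : K) (hα : α ^ 2 = algebraMap ℚ K δ)
    (hind : LinearIndependent ℚ ![(1 : K), α]) (p q : ℚ) :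
    Algebra.norm ℚ (algebraMap ℚ K p + algebraMap ℚ K q * α) = p ^ 2 - δ * q ^ 2 := by
  have hcard : Fintype.card (Fin 2) = Module.finrank ℚ K := by simp [hdeg]
  set b := basisOfLinearIndependentOfCardEqFinrank hind hcard with hb
  have hb0 : b 0 = 1 := by
    rw [hb, coe_basisOfLinearIndependentOfCardEqFinrank]; rfl
  have hb1 : b 1 = α := by
    rw [hb, coe_basisOfLinearIndependentOfCardEqFinrank]; rfl
  have hrepr : ∀ p q : ℚ, ∀ i : Fin 2,
      (b.repr (algebraMap ℚ K p + algebraMap ℚ K q * α)) i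
        = (p • Finsupp.single (0 : Fin 2) (1:ℚ) + q • Finsupp.single (1 : Fin 2) (1:ℚ)) i := by
    intro p q i
    have hz : algebraMap ℚ K p + algebraMap ℚ K q * α = p • b 0 + q • b 1 := by
      rw [hb0, hb1, Algebra.smul_def, Algebra.smul_def, mul_one]
    rw [hz, map_add, map_smul, map_smul, b.repr_self, b.repr_self]
  have hmul1 : (algebraMap ℚ K p + algebraMap ℚ K q * α) * α
      = algebraMap ℚ K (δ * q) + algebraMap ℚ K p * α := by
    have : α * α = algebraMap ℚ K δ := by rw [← pow_two]; exact hα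
    rw [add_mul, mul_assoc, this, ← map_mul]
    ring_nf
  rw [Algebra.norm_eq_matrix_det b, Matrix.det_fin_two]
  have e00 : Algebra.leftMulMatrix b (algebraMap ℚ K p + algebraMap ℚ K q * α) 0 0 = p := by
    rw [Algebra.leftMulMatrix_eq_repr_mul, hb0, mul_one, hrepr]
    simp [Finsupp.single_apply]
  have e10 : Algebra.leftMulMatrix b (algebraMap ℚ K p + algebraMap ℚ K q * α) 1 0 = q := by
    rw [Algebra.leftMulMatrix_eq_repr_mul, hb0, mul_one, hrepr]
    simp [Finsupp.single_apply]
  have e01 : Algebra.leftMulMatrix b (algebraMap ℚ K p + algebraMap ℚ K q * α) 0 1 = δ * q := by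
    rw [Algebra.leftMulMatrix_eq_repr_mul, hb1, hmul1, hrepr]
    simp [Finsupp.single_apply]
  have e11 : Algebra.leftMulMatrix b (algebraMap ℚ K p + algebraMap ℚ K q * α) 1 1 = p := by
    rw [Algebra.leftMulMatrix_eq_repr_mul, hb1, hmul1, hrepr]
    simp [Finsupp.single_apply]
  rw [e00, e11, e01, e10]
  ring

abbrev M4 := (((ℚ × ℚ) × ℚ) × ℚ)

def pr1 : M4 →ₗ[ℚ] ℚ :=
  (LinearMap.fst ℚ ℚ ℚ).comp ((LinearMap.fst ℚ (ℚ × ℚ) ℚ).comp (LinearMap.fst ℚ ((ℚ × ℚ) × ℚ) ℚ))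
def pr2 : M4 →ₗ[ℚ] ℚ :=
  (LinearMap.snd ℚ ℚ ℚ).comp ((LinearMap.fst ℚ (ℚ × ℚ) ℚ).comp (LinearMap.fst ℚ ((ℚ × ℚ) × ℚ) ℚ))
def pr3 : M4 →ₗ[ℚ] ℚ :=
  (LinearMap.snd ℚ (ℚ × ℚ) ℚ).comp (LinearMap.fst ℚ ((ℚ × ℚ) × ℚ) ℚ)
def pr4 : M4 →ₗ[ℚ] ℚ := LinearMap.snd ℚ ((ℚ × ℚ) × ℚ) ℚ

/-- the isometry's underlying linear map -/
def Lmap (K : Type) [Field K] [NumberField K] (aa bb ss ss' tt tt' : ℚ) (α : K) :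
    M4 →ₗ[ℚ] K × K :=
  LinearMap.prod
    (LinearMap.toSpanSingleton ℚ K 1 ∘ₗ (aa • pr1 + bb • pr2)
      + LinearMap.toSpanSingleton ℚ K α ∘ₗ (ss • pr3 + ss' • pr4))
    (LinearMap.toSpanSingleton ℚ K 1 ∘ₗ (bb • pr1 + aa • pr2)
      + LinearMap.toSpanSingleton ℚ K α ∘ₗ (tt • pr3 + tt' • pr4))

lemma Lmap_apply (K : Type) [Field K] [NumberField K] (aa bb ss ss' tt tt' : ℚ) (α : K)
    (v : M4) :
    Lmap K aa bb ss ss' tt tt' α v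
      = (algebraMap ℚ K (aa * v.1.1.1 + bb * v.1.1.2) + algebraMap ℚ K (ss * v.1.2 + ss' * v.2) * α,
         algebraMap ℚ K (bb * v.1.1.1 + aa * v.1.1.2) + algebraMap ℚ K (tt * v.1.2 + tt' * v.2) * α) := by
  simp only [Lmap, LinearMap.prod_apply, Function.prod, LinearMap.add_apply, LinearMap.comp_apply,
    LinearMap.smul_apply, pr1, pr2, pr3, pr4, LinearMap.fst_apply, LinearMap.snd_apply,
    LinearMap.toSpanSingleton_apply, smul_eq_mul]
  rw [Algebra.smul_def, Algebra.smul_def, Algebra.smul_def, Algebra.smul_def]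
  simp [mul_one]

end Aux8C

/-- For `K` a real quadratic field and the quadratic form
`Q_A(z₁,z₂) = N(z₁)/N𝔞 - N(z₂)/N𝔞` on `V_A = K × K`, the center of the even
subalgebra `C⁰` of the Clifford algebra of `Q_A` is isomorphic as a ℚ-algebra
to the split étale algebra `ℚ × ℚ`. -/
theorem statement8 (K : Type) [Field K] [NumberField K]
    (hdeg : Module.finrank ℚ K = 2)
    (d : ℤ) (hd : 1 < d) (hsf : Squarefree d)
    (α : K) (hα : α ^ 2 = (d : K))
    (𝔞 : Ideal (NumberField.RingOfIntegers K)) (h𝔞 : 𝔞 ≠ ⊥)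
    (Q : QuadraticForm ℚ (K × K))
    (hQ : ∀ z : K × K,
      Q z = Algebra.norm ℚ z.1 / (Ideal.absNorm 𝔞 : ℚ)
          - Algebra.norm ℚ z.2 / (Ideal.absNorm 𝔞 : ℚ)) :
    Nonempty ((Subalgebra.center ℚ ↥(CliffordAlgebra.even Q)) ≃ₐ[ℚ] (ℚ × ℚ)) := by
  classical
  set n : ℚ := ((Ideal.absNorm 𝔞 : ℕ) : ℚ) with hn_def
  have hn : n ≠ 0 := by
    rw [hn_def, ne_eq, Nat.cast_eq_zero, Ideal.absNorm_eq_zero_iff]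
    exact h𝔞
  have hδ : ((d : ℚ)) ≠ 0 := Int.cast_ne_zero.mpr (by omega)
  have hnsq : ¬ IsSquare ((d : ℤ) : ℚ) := by
    rw [Rat.isSquare_intCast_iff]
    rintro ⟨m, hm⟩
    have hu : IsUnit m := hsf m (by rw [hm])
    rcases Int.isUnit_iff.mp hu with rfl | rfl <;> simp at hm <;> omega
  have hα' : α ^ 2 = algebraMap ℚ K ((d : ℚ)) := by
    rw [hα]; exact (map_intCast (algebraMap ℚ K) d).symm
  have hzero : ∀ p q : ℚ, algebraMap ℚ K p + algebraMap ℚ K q * α = 0 → p = 0 ∧ q = 0 := by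
    intro p q h
    by_cases hq : q = 0
    · subst hq
      rw [map_zero, zero_mul, add_zero] at h
      exact ⟨(algebraMap ℚ K).injective (h.trans (map_zero _).symm), rfl⟩
    · exfalso
      have hqK : algebraMap ℚ K q ≠ 0 :=
        fun hc => hq ((algebraMap ℚ K).injective (hc.trans (map_zero _).symm))
      have hmul : algebraMap ℚ K q * α = algebraMap ℚ K (-p) := by
        rw [map_neg]
        linear_combination h
      have hαval : α = algebraMap ℚ K (-(p/q)) := by
        apply mul_left_cancel₀ hqK
        rw [hmul, ← map_mul]
        congr 1
        field_simp
      have hdq : algebraMap ℚ K ((d : ℚ)) = algebraMap ℚ K ((-(p/q))^2) := by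
        rw [← hα', hαval, ← map_pow]
      have : ((d : ℚ)) = (-(p/q))^2 := (algebraMap ℚ K).injective hdq
      exact hnsq ⟨-(p/q), by rw [this]; ring⟩
  have hαne : α ≠ 0 := by
    intro h
    rw [h] at hα'
    have : ((d : ℚ)) = 0 := ((algebraMap ℚ K).injective (by rw [← hα']; simp)).symm
    exact hδ this
  have hind : LinearIndependent ℚ ![(1 : K), α] := by
    rw [linearIndependent_fin2]
    refine ⟨by simpa using hαne, ?_⟩
    intro a ha
    simp only [Matrix.cons_val_one, Matrix.head_cons, Matrix.cons_val_zero] at ha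
    have h := hzero (-1) a (by
      rw [map_neg, map_one, ← Algebra.smul_def, ha]
      ring)
    norm_num at h
  have hNform := norm_formula hdeg ((d : ℚ)) α hα' hind
  -- the isometry
  set L : M4 →ₗ[ℚ] K × K :=
    Lmap K ((n+1)/2) ((n-1)/2) ((n/(d:ℚ)-1)/2) ((n/(d:ℚ)+1)/2) ((n/(d:ℚ)+1)/2) ((n/(d:ℚ)-1)/2) α
    with hL_def
  have hLv : ∀ v : M4, Q (L v) = (CliffordAlgebra.EquivEven.Q' Q3) v := by
    intro v
    obtain ⟨⟨⟨x, y⟩, z⟩, w⟩ := v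
    have hc := Lmap_apply K ((n+1)/2) ((n-1)/2) ((n/(d:ℚ)-1)/2) ((n/(d:ℚ)+1)/2)
      ((n/(d:ℚ)+1)/2) ((n/(d:ℚ)-1)/2) α (((x, y), z), w)
    rw [hQ, hL_def, hc]
    simp only [Prod.fst, Prod.snd]
    rw [hNform, hNform, CliffordAlgebra.EquivEven.Q'_apply, Q3_apply]
    simp only []
    rw [hn_def] at hn ⊢
    field_simp
    ring
  have hLzero : ∀ v : M4, L v = 0 → v = 0 := by
    intro v hv
    obtain ⟨⟨⟨x, y⟩, z⟩, w⟩ := v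
    have hc := Lmap_apply K ((n+1)/2) ((n-1)/2) ((n/(d:ℚ)-1)/2) ((n/(d:ℚ)+1)/2)
      ((n/(d:ℚ)+1)/2) ((n/(d:ℚ)-1)/2) α (((x, y), z), w)
    rw [hL_def, hc] at hv
    have h1 : algebraMap ℚ K ((n+1)/2 * x + (n-1)/2 * y)
        + algebraMap ℚ K ((n/(d:ℚ)-1)/2 * z + (n/(d:ℚ)+1)/2 * w) * α = 0 := by
      have := congrArg Prod.fst hv
      simpa using this
    have h2 : algebraMap ℚ K ((n-1)/2 * x + (n+1)/2 * y)
        + algebraMap ℚ K ((n/(d:ℚ)+1)/2 * z + (n/(d:ℚ)-1)/2 * w) * α = 0 := by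
      have := congrArg Prod.snd hv
      simpa using this
    obtain ⟨e1, e2⟩ := hzero _ _ h1
    obtain ⟨e3, e4⟩ := hzero _ _ h2
    have hm : (n/(d:ℚ)) ≠ 0 := div_ne_zero hn hδ
    have hx : x = 0 := by
      have h4x : (4*n) * x = 0 := by linear_combination (2*(n+1))*e1 - (2*(n-1))*e3
      rcases mul_eq_zero.mp h4x with h | h
      · exact absurd h (by simpa using hn)
      · exact h
    have hy : y = 0 := by
      have h4y : (4*n) * y = 0 := by linear_combination (-(2*(n-1)))*e1 + (2*(n+1))*e3
      rcases mul_eq_zero.mp h4y with h | h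
      · exact absurd h (by simpa using hn)
      · exact h
    have hz : z = 0 := by
      have h4z : (4*(n/(d:ℚ))) * z = 0 := by
        linear_combination (-(2*(n/(d:ℚ)-1)))*e2 + (2*(n/(d:ℚ)+1))*e4
      rcases mul_eq_zero.mp h4z with h | h
      · exact absurd h (by simpa using hm)
      · exact h
    have hw : w = 0 := by
      have h4w : (4*(n/(d:ℚ))) * w = 0 := by
        linear_combination (2*(n/(d:ℚ)+1))*e2 + (-(2*(n/(d:ℚ)-1)))*e4
      rcases mul_eq_zero.mp h4w with h | h
      · exact absurd h (by simpa using hm)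
      · exact h
    subst hx; subst hy; subst hz; subst hw
    rfl
  have hLinj : Function.Injective L := by
    intro a b hab
    have := hLzero (a - b) (by rw [map_sub, hab, sub_self])
    exact sub_eq_zero.mp this
  have hfr : Module.finrank ℚ M4 = Module.finrank ℚ (K × K) := by
    simp [Module.finrank_prod, Module.finrank_self, hdeg]
  have hLsurj : Function.Surjective L :=
    (LinearMap.injective_iff_surjective_of_finrank_eq_finrank hfr).mp hLinj
  let ψ : (CliffordAlgebra.EquivEven.Q' Q3).IsometryEquiv Q :=
    { toLinearEquiv := LinearEquiv.ofBijective L ⟨hLinj, hLsurj⟩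
      map_app' := hLv }
  exact ⟨(myCenterCongr (myEvenCongr ψ).symm).trans
    (((myCenterCongr (CliffordAlgebra.equivEven Q3)).symm).trans
      ((myCenterCongr Φc).trans centerAAEquiv))⟩
end Aux8
end

section
/- Let K be a real quadratic field with field norm N = N_{K/ℚ}, let c be a positive rational number, and let Q be the quadratic form Q(z) = N(z)/c on K viewed as a 2-dimensional ℚ-vector space. For a ℚ-linear automorphism g : K → K the following are equivalent: (i) Q(g(z)) = Q(z) for all z ∈ K and det(g) = 1; (ii) there exists x ∈ K with N(x) = 1 such that g(z) = x·z for all z ∈ K. Moreover, the element x in (ii) is unique. Consequently the special orthogonal group SO(K, Q) is isomorphic to the norm-one group K¹ = { x ∈ K× : N(x) = 1 }. -/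
section aux

lemma no_rat_sqrt (d : ℤ) (hd : 1 < d) (hsf : Squarefree d) :
    ∀ q : ℚ, q ^ 2 ≠ (d : ℚ) := by
  intro q hq
  have hden : (q.den : ℚ) ≠ 0 := by exact_mod_cast q.den_ne_zero
  have h1 : (q.num : ℚ) ^ 2 = (d : ℚ) * (q.den : ℚ) ^ 2 := by
    rw [← Rat.num_div_den q] at hq
    field_simp at hq
    rw [mul_comm]; exact_mod_cast hq
  have h2 : q.num ^ 2 = d * (q.den : ℤ) ^ 2 := by exact_mod_cast h1
  have hdvd : q.den ^ 2 ∣ q.num.natAbs ^ 2 := by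
    have h3 : ((q.den : ℤ)) ^ 2 ∣ q.num ^ 2 := ⟨d, by linarith⟩
    have h4 := Int.natAbs_dvd_natAbs.mpr h3
    simpa [Int.natAbs_pow] using h4
  have hcop : Nat.Coprime (q.den ^ 2) (q.num.natAbs ^ 2) := q.reduced.symm.pow 2 2
  have hden1 : q.den = 1 := by
    have h5 := hcop.eq_one_of_dvd hdvd
    nlinarith [q.pos]
  have hd2 : d = q.num * q.num := by
    rw [hden1] at h2
    push_cast at h2
    rw [mul_one] at h2
    rw [← h2]; ring
  have := hsf q.num ⟨1, by linarith⟩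
  rcases Int.isUnit_iff.mp this with h | h <;> rw [h] at hd2 <;> omega

end aux

/-- For `K` a real quadratic field with norm `N` and `Q(z) = N(z)/c`
(`c > 0` rational), a ℚ-linear automorphism `g` of `K` preserves `Q` and has
determinant `1` if and only if it is multiplication by a (unique) norm-one
element `x ∈ K`; consequently `SO(K, Q) ≅ K¹`. -/
theorem statement13 (K : Type) [Field K] [NumberField K]
    (hdeg : Module.finrank ℚ K = 2)
    (d : ℤ) (hd : 1 < d) (hsf : Squarefree d)
    (α : K) (hα : α ^ 2 = (d : K))
    (c : ℚ) (hc : 0 < c) :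
    ∀ g : K ≃ₗ[ℚ] K,
      (((∀ z : K, Algebra.norm ℚ (g z) / c = Algebra.norm ℚ z / c) ∧
          LinearMap.det (g : K →ₗ[ℚ] K) = 1) ↔
        ∃ x : K, Algebra.norm ℚ x = 1 ∧ ∀ z : K, g z = x * z) ∧
      (∀ x y : K,
        (Algebra.norm ℚ x = 1 ∧ ∀ z : K, g z = x * z) →
        (Algebra.norm ℚ y = 1 ∧ ∀ z : K, g z = y * z) → x = y) := by
  have hnsq := no_rat_sqrt d hd hsf
  have hdK : (d : K) = algebraMap ℚ K (d : ℚ) := (map_intCast (algebraMap ℚ K) d).symm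
  -- linear independence of {1, α}
  have hli : LinearIndependent ℚ ![(1 : K), α] := by
    rw [LinearIndependent.pair_iff' one_ne_zero]
    intro a ha
    apply hnsq a
    have h6 : (algebraMap ℚ K) (a ^ 2) = (algebraMap ℚ K) (d : ℚ) := by
      rw [← hdK, ← hα, ← ha, Algebra.smul_def, mul_one, map_pow]
    exact (algebraMap ℚ K).injective h6
  let B : Module.Basis (Fin 2) ℚ K :=
    basisOfLinearIndependentOfCardEqFinrank hli (by simp [hdeg])
  have hB0 : B 0 = 1 := by
    simp [B, coe_basisOfLinearIndependentOfCardEqFinrank]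
  have hB1 : B 1 = α := by
    simp [B, coe_basisOfLinearIndependentOfCardEqFinrank]
  -- norm formula
  have hmulα : ∀ a b : ℚ, (a • (1:K) + b • α) * α = (b * d) • (1:K) + a • α := by
    intro a b
    have h2 : α * α = (d:K) := by rw [← sq]; exact hα
    rw [add_mul, smul_mul_assoc, smul_mul_assoc, one_mul, h2, hdK]
    simp only [Algebra.smul_def, map_mul, mul_one]
    ring
  have hrepr0 : ∀ a b : ℚ, B.repr (a • (1:K) + b • α) 0 = a := by
    intro a b
    rw [← hB0, ← hB1]
    simp
  have hrepr1 : ∀ a b : ℚ, B.repr (a • (1:K) + b • α) 1 = b := by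
    intro a b
    rw [← hB0, ← hB1]
    simp
  have hnorm : ∀ a b : ℚ,
      Algebra.norm ℚ (a • (1:K) + b • α) = a ^ 2 - d * b ^ 2 := by
    intro a b
    rw [Algebra.norm_eq_matrix_det B, Matrix.det_fin_two]
    have e00 : Algebra.leftMulMatrix B (a • (1:K) + b • α) 0 0 = a := by
      rw [Algebra.leftMulMatrix_eq_repr_mul, hB0, mul_one, hrepr0]
    have e10 : Algebra.leftMulMatrix B (a • (1:K) + b • α) 1 0 = b := by
      rw [Algebra.leftMulMatrix_eq_repr_mul, hB0, mul_one, hrepr1]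
    have e01 : Algebra.leftMulMatrix B (a • (1:K) + b • α) 0 1 = b * d := by
      rw [Algebra.leftMulMatrix_eq_repr_mul, hB1, hmulα, hrepr0]
    have e11 : Algebra.leftMulMatrix B (a • (1:K) + b • α) 1 1 = a := by
      rw [Algebra.leftMulMatrix_eq_repr_mul, hB1, hmulα, hrepr1]
    rw [e00, e01, e10, e11]; ring
  have hdecomp : ∀ z : K, z = B.repr z 0 • (1:K) + B.repr z 1 • α := by
    intro z
    have h7 := B.sum_repr z
    rw [Fin.sum_univ_two, hB0, hB1] at h7
    exact h7.symm
  have hNα : Algebra.norm ℚ α = -d := by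
    have h8 := hnorm 0 1
    simpa using h8
  intro g
  constructor
  · constructor
    · rintro ⟨hQ, hdet⟩
      have hN : ∀ z : K, Algebra.norm ℚ (g z) = Algebra.norm ℚ z := by
        intro z
        have h9 := hQ z
        field_simp at h9
        exact h9
      obtain ⟨x, hxdef⟩ : ∃ x : K, g 1 = x := ⟨_, rfl⟩
      have hNx : Algebra.norm ℚ x = 1 := by rw [← hxdef, hN, map_one]
      have hx0 : x ≠ 0 := by
        intro h
        rw [h] at hNx
        have h10 : Algebra.norm ℚ (0:K) = 0 := by
          simpa using hnorm 0 0
        rw [h10] at hNx; norm_num at hNx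
      obtain ⟨w, hwdef⟩ : ∃ w : K, x⁻¹ * g α = w := ⟨_, rfl⟩
      have hgα : g α = x * w := by
        rw [← hwdef, ← mul_assoc, mul_inv_cancel₀ hx0, one_mul]
      have hNw : Algebra.norm ℚ w = -d := by
        have h1 : Algebra.norm ℚ x * Algebra.norm ℚ w = Algebra.norm ℚ α := by
          rw [← map_mul, ← hgα, hN]
        rw [hNx, one_mul] at h1
        rw [h1, hNα]
      have hN1w : Algebra.norm ℚ (1 + w) = 1 - d := by
        have h1 : g (1 + α) = x * (1 + w) := by
          rw [map_add, hxdef, hgα, mul_add, mul_one]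
        have h2 : Algebra.norm ℚ x * Algebra.norm ℚ (1 + w)
            = Algebra.norm ℚ (1 + α) := by rw [← map_mul, ← h1, hN]
        rw [hNx, one_mul] at h2
        rw [h2]
        have h3 := hnorm 1 1
        simpa using h3
      -- coordinates of w
      obtain ⟨s, hsdef⟩ : ∃ s : ℚ, B.repr w 0 = s := ⟨_, rfl⟩
      obtain ⟨t, htdef⟩ : ∃ t : ℚ, B.repr w 1 = t := ⟨_, rfl⟩
      have hw : w = s • (1:K) + t • α := by
        rw [← hsdef, ← htdef]; exact hdecomp w
      have hNw' : s ^ 2 - d * t ^ 2 = -d := by rw [← hnorm, ← hw, hNw]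
      have h1w : (1 + s) ^ 2 - d * t ^ 2 = 1 - d := by
        rw [← hnorm, ← hN1w]
        congr 1
        rw [hw, add_smul, one_smul, add_assoc]
      have hs : s = 0 := by nlinarith
      have ht2 : t * t = 1 := by
        have hd0 : (0:ℚ) < d := by exact_mod_cast (by omega : (0:ℤ) < d)
        rw [hs] at hNw'
        nlinarith
      have hwα : w = t • α := by rw [hw, hs]; simp
      -- determinant computation
      obtain ⟨p, hpdef⟩ : ∃ p : ℚ, B.repr x 0 = p := ⟨_, rfl⟩
      obtain ⟨q, hqdef⟩ : ∃ q : ℚ, B.repr x 1 = q := ⟨_, rfl⟩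
      have hx : x = p • (1:K) + q • α := by
        rw [← hpdef, ← hqdef]; exact hdecomp x
      have hNx' : p ^ 2 - d * q ^ 2 = 1 := by rw [← hnorm, ← hx, hNx]
      have hgα' : g α = (t * (q * d)) • (1:K) + (t * p) • α := by
        rw [hgα, hwα, mul_smul_comm, hx, hmulα, smul_add, smul_smul, smul_smul]
      have hg0 : (g : K →ₗ[ℚ] K) (B 0) = p • (1:K) + q • α := by
        rw [hB0]; show g 1 = _; rw [hxdef, hx]
      have hg1 : (g : K →ₗ[ℚ] K) (B 1) = (t * (q * d)) • (1:K) + (t * p) • α := by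
        rw [hB1]; exact hgα'
      have hdet' : LinearMap.det (g : K →ₗ[ℚ] K) = t * (p ^ 2 - d * q ^ 2) := by
        rw [← LinearMap.det_toMatrix B, Matrix.det_fin_two]
        have e00 : LinearMap.toMatrix B B (g : K →ₗ[ℚ] K) 0 0 = p := by
          rw [LinearMap.toMatrix_apply, hg0, hrepr0]
        have e10 : LinearMap.toMatrix B B (g : K →ₗ[ℚ] K) 1 0 = q := by
          rw [LinearMap.toMatrix_apply, hg0, hrepr1]
        have e01 : LinearMap.toMatrix B B (g : K →ₗ[ℚ] K) 0 1 = t * (q * d) := by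
          rw [LinearMap.toMatrix_apply, hg1, hrepr0]
        have e11 : LinearMap.toMatrix B B (g : K →ₗ[ℚ] K) 1 1 = t * p := by
          rw [LinearMap.toMatrix_apply, hg1, hrepr1]
        rw [e00, e01, e10, e11]; ring
      have ht : t = 1 := by
        rw [hdet, hNx', mul_one] at hdet'
        exact hdet'.symm
      have hgα1 : g α = x * α := by rw [hgα, hwα, ht, one_smul]
      refine ⟨x, hNx, ?_⟩
      intro z
      have hz := hdecomp z
      calc g z = g (B.repr z 0 • (1:K) + B.repr z 1 • α) := by rw [← hz]
        _ = B.repr z 0 • g 1 + B.repr z 1 • g α := by rw [map_add, map_smul, map_smul]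
        _ = B.repr z 0 • x + B.repr z 1 • (x * α) := by rw [hxdef, hgα1]
        _ = x * (B.repr z 0 • (1:K) + B.repr z 1 • α) := by
              rw [mul_add, mul_smul_comm, mul_smul_comm, mul_one]
        _ = x * z := by rw [← hz]
    · rintro ⟨x, hNx, hxz⟩
      constructor
      · intro z
        rw [hxz, map_mul, hNx, one_mul]
      · have h11 : (g : K →ₗ[ℚ] K) = Algebra.lmul ℚ K x := by
          ext z
          simp [hxz z]
        rw [h11, ← Algebra.norm_apply]
        exact hNx
  · rintro x y ⟨-, hx⟩ ⟨-, hy⟩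
    have h12 := (hx 1).symm.trans (hy 1)
    simpa using h12
end

section
/- Let K be a real quadratic field with discriminant d_K and nontrivial automorphism σ, let 𝔞 be a nonzero ideal of the ring of integers O_K with absolute norm N𝔞, and let (e₁, e₂) be a ℤ-basis of 𝔞. Then the determinant of the 2×2 matrix with (i,j) entry Tr_{K/ℚ}(eᵢ·σ(eⱼ)) equals −(N𝔞)²·d_K. Equivalently, the Gram matrix of the twisted trace form (x, y) ↦ Tr_{K/ℚ}(x·σ(y))/N𝔞 with respect to (e₁, e₂) has determinant −d_K. -/
/-- For `K` a real quadratic field with discriminant `d_K` and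
nontrivial automorphism `σ`, and `(e₁, e₂)` a ℤ-basis of a nonzero ideal `𝔞`
of `O_K`, the determinant of the matrix `(Tr_{K/ℚ}(eᵢ·σ(eⱼ)))ᵢⱼ` equals
`-(N𝔞)²·d_K`; equivalently, the Gram matrix of the twisted trace form
`(x,y) ↦ Tr(x·σ(y))/N𝔞` with respect to `(e₁, e₂)` has determinant `-d_K`. -/
theorem statement14 (K : Type) [Field K] [NumberField K]
    (hdeg : Module.finrank ℚ K = 2)
    (d : ℤ) (hd : 1 < d) (hsf : Squarefree d)
    (α : K) (hα : α ^ 2 = (d : K))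
    (σ : K ≃ₐ[ℚ] K) (hσ : σ ≠ (AlgEquiv.refl : K ≃ₐ[ℚ] K))
    (𝔞 : Ideal (NumberField.RingOfIntegers K)) (h𝔞 : 𝔞 ≠ ⊥)
    (b : Module.Basis (Fin 2) ℤ 𝔞) :
    Matrix.det (Matrix.of fun i j : Fin 2 =>
        Algebra.trace ℚ K
          (algebraMap (NumberField.RingOfIntegers K) K (b i) *
            σ (algebraMap (NumberField.RingOfIntegers K) K (b j))))
      = -((Ideal.absNorm 𝔞 : ℚ)) ^ 2 * (NumberField.discr K : ℚ) ∧
    Matrix.det (Matrix.of fun i j : Fin 2 =>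
        Algebra.trace ℚ K
          (algebraMap (NumberField.RingOfIntegers K) K (b i) *
            σ (algebraMap (NumberField.RingOfIntegers K) K (b j)))
          / (Ideal.absNorm 𝔞 : ℚ))
      = -(NumberField.discr K : ℚ) := by
  classical
  -- Galois theory: the automorphism group is `{1, σ}`
  have hcard : Fintype.card (K ≃ₐ[ℚ] K) = 2 := by
    refine le_antisymm ?_ ?_
    · calc Fintype.card (K ≃ₐ[ℚ] K) = Fintype.card (K →ₐ[ℚ] K) :=
            Fintype.card_congr (algEquivEquivAlgHom ℚ K)
        _ ≤ Module.finrank K (K →ₗ[ℚ] K) := finrank_algHom ℚ K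
        _ = Module.finrank ℚ K := Module.finrank_linearMap_self ℚ K K
        _ = 2 := hdeg
    · exact Fintype.one_lt_card_iff.mpr ⟨σ, AlgEquiv.refl, hσ⟩
  haveI hGal : IsGalois ℚ K :=
    IsGalois.of_card_aut_eq_finrank ℚ K (by rw [Nat.card_eq_fintype_card, hcard, hdeg])
  have huniv : ({AlgEquiv.refl, σ} : Finset (K ≃ₐ[ℚ] K)) = Finset.univ :=
    Finset.eq_univ_of_card _ (by rw [Finset.card_pair (Ne.symm hσ), hcard])
  have htr : ∀ z : K, algebraMap ℚ K (Algebra.trace ℚ K z) = z + σ z := by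
    intro z
    rw [trace_eq_sum_automorphisms, ← huniv, Finset.sum_pair (Ne.symm hσ)]
    rfl
  have hmul : σ * σ = AlgEquiv.refl := by
    have hmem : σ * σ ∈ ({AlgEquiv.refl, σ} : Finset (K ≃ₐ[ℚ] K)) :=
      huniv ▸ Finset.mem_univ _
    rcases Finset.mem_insert.mp hmem with h | h
    · exact h
    · exact absurd (mul_left_cancel ((Finset.mem_singleton.mp h).trans (mul_one σ).symm)) hσ
  have hinv : ∀ z : K, σ (σ z) = z := by
    intro z
    have := congrArg (fun τ : K ≃ₐ[ℚ] K => τ z) hmul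
    simpa using this
  set e : Fin 2 → K := fun i => algebraMap (NumberField.RingOfIntegers K) K (b i) with he
  set M : Matrix (Fin 2) (Fin 2) ℚ :=
    Matrix.of fun i j : Fin 2 => Algebra.trace ℚ K (e i * σ (e j)) with hMdef
  -- Step 1 : the twisted determinant is minus the discriminant of the family `e`
  have entry1 : ∀ i j, algebraMap ℚ K (Algebra.trace ℚ K (e i * σ (e j)))
      = e i * σ (e j) + σ (e i) * e j := by
    intro i j; rw [htr, map_mul, hinv]
  have entry2 : ∀ i j, algebraMap ℚ K (Algebra.trace ℚ K (e i * e j))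
      = e i * e j + σ (e i) * σ (e j) := by
    intro i j; rw [htr, map_mul]
  have hM : M.det = - Algebra.discr ℚ e := by
    apply RingHom.injective (algebraMap ℚ K)
    rw [map_neg, Algebra.discr_def, RingHom.map_det, RingHom.map_det]
    simp only [Matrix.det_fin_two, RingHom.mapMatrix_apply, Matrix.map_apply, Matrix.of_apply,
      Algebra.traceMatrix_apply, Algebra.traceForm_apply, hMdef, entry1, entry2, map_add, map_mul,
      map_sub, neg_sub]
    ring
  -- Step 2 : the discriminant of `e` is `N𝔞² · d_K`
  have hcardι : Fintype.card (Module.Free.ChooseBasisIndex ℤ (NumberField.RingOfIntegers K)) = 2 := by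
    rw [← Module.finrank_eq_card_chooseBasisIndex, NumberField.RingOfIntegers.rank, hdeg]
  let eqv : Module.Free.ChooseBasisIndex ℤ (NumberField.RingOfIntegers K) ≃ Fin 2 :=
    Fintype.equivFinOfCardEq hcardι
  let b₀ : Module.Basis (Fin 2) ℤ (NumberField.RingOfIntegers K) :=
    (NumberField.RingOfIntegers.basis K).reindex eqv
  let B : Module.Basis (Fin 2) ℚ K := (NumberField.integralBasis K).reindex eqv
  have hPmat : B.toMatrix e = (b₀.toMatrix ((↑) ∘ b)).map (Int.cast) := by
    ext i j
    simp only [Module.Basis.toMatrix_apply, Matrix.map_apply, Function.comp_apply, B, b₀,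
      Module.Basis.repr_reindex_apply, he, NumberField.integralBasis_repr_apply, algebraMap_int_eq,
      eq_intCast]
  have hnorm : (b₀.det ((↑) ∘ b)).natAbs = Ideal.absNorm 𝔞 :=
    Ideal.natAbs_det_basis_change b₀ 𝔞 b
  have hdetP : ((B.toMatrix e).det) ^ 2 = (Ideal.absNorm 𝔞 : ℚ) ^ 2 := by
    rw [hPmat, show ((Int.cast : ℤ → ℚ)) = ⇑(Int.castRingHom ℚ) from rfl,
      ← RingHom.mapMatrix_apply, ← RingHom.map_det, ← Module.Basis.det_apply, ← hnorm]
    push_cast [Nat.cast_natAbs]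
    rw [sq_abs]
    simp
  have hdiscrB : Algebra.discr ℚ B = (NumberField.discr K : ℚ) := by
    rw [show ⇑B = ⇑(NumberField.integralBasis K) ∘ ⇑eqv.symm from Module.Basis.coe_reindex _ _,
      Algebra.discr_reindex, ← NumberField.coe_discr]
  have hdiscr : Algebra.discr ℚ e = (Ideal.absNorm 𝔞 : ℚ) ^ 2 * (NumberField.discr K : ℚ) := by
    rw [← B.toMatrix_map_vecMul e, Algebra.discr_of_matrix_vecMul, hdetP, hdiscrB]
  have part1 : M.det = -((Ideal.absNorm 𝔞 : ℚ)) ^ 2 * (NumberField.discr K : ℚ) := by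
    rw [hM, hdiscr]; ring
  refine ⟨part1, ?_⟩
  -- Part 2
  have hn : (Ideal.absNorm 𝔞 : ℚ) ≠ 0 := by
    exact_mod_cast fun h => h𝔞 (Ideal.absNorm_eq_zero_iff.mp h)
  have hsm : (Matrix.of fun i j : Fin 2 =>
      Algebra.trace ℚ K (e i * σ (e j)) / (Ideal.absNorm 𝔞 : ℚ))
      = ((Ideal.absNorm 𝔞 : ℚ))⁻¹ • M := by
    ext i j
    simp [hMdef, div_eq_inv_mul]
  rw [show (Matrix.of fun i j : Fin 2 =>
      Algebra.trace ℚ K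
        (algebraMap (NumberField.RingOfIntegers K) K (b i) *
          σ (algebraMap (NumberField.RingOfIntegers K) K (b j)))
        / (Ideal.absNorm 𝔞 : ℚ)) = ((Ideal.absNorm 𝔞 : ℚ))⁻¹ • M from hsm,
    Matrix.det_smul, part1, Fintype.card_fin]
  field_simp
end
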